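/- In the theta graph Θ_{4,6,4} (paths of lengths 4, 6, 4 between u and v), no 2-element subset of the vertices is a resolving set; hence the metric dimension of Θ_{4,6,4} equals 3. -/
import Mathlib

/-- `W` is a resolving set for `G`: distinct vertices have distinct
distance vectors to the elements of `W`. -/
def IsResolving {V : Type*} (G : SimpleGraph V) (W : Set V) : Prop :=
  ∀ u v : V, (∀ w ∈ W, G.dist u w = G.dist v w) → u = v

/-- The metric dimension of `G`: the minimum cardinality of a resolving set. -/
noncomputable def metricDim {V : Type*} [Fintype V] (G : SimpleGraph V) : ℕ :=
  sInf {n | ∃ W : Finset V, IsResolving G (↑W) ∧ W.card = n}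

/-- The theta graph `Θ_{4,6,4}`: vertices `u = 0`, `u₁ u₂ u₃ = 1 2 3`, `v = 4`,
`v₁ … v₅ = 5 6 7 8 9`, `w₁ w₂ w₃ = 10 11 12`; three internally disjoint
`u`–`v` paths of lengths 4, 6, 4. -/
def theta464 : SimpleGraph (Fin 13) :=
  SimpleGraph.fromEdgeSet
    {s(0,1), s(1,2), s(2,3), s(3,4),
     s(0,5), s(5,6), s(6,7), s(7,8), s(8,9), s(9,4),
     s(0,10), s(10,11), s(11,12), s(12,4)}

namespace Theta464Aux

def dmat : List (List Nat) :=
 [[0, 1, 2, 3, 4, 1, 2, 3, 4, 5, 1, 2, 3],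
  [1, 0, 1, 2, 3, 2, 3, 4, 5, 4, 2, 3, 4],
  [2, 1, 0, 1, 2, 3, 4, 5, 4, 3, 3, 4, 3],
  [3, 2, 1, 0, 1, 4, 5, 4, 3, 2, 4, 3, 2],
  [4, 3, 2, 1, 0, 5, 4, 3, 2, 1, 3, 2, 1],
  [1, 2, 3, 4, 5, 0, 1, 2, 3, 4, 2, 3, 4],
  [2, 3, 4, 5, 4, 1, 0, 1, 2, 3, 3, 4, 5],
  [3, 4, 5, 4, 3, 2, 1, 0, 1, 2, 4, 5, 4],
  [4, 5, 4, 3, 2, 3, 2, 1, 0, 1, 5, 4, 3],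
  [5, 4, 3, 2, 1, 4, 3, 2, 1, 0, 4, 3, 2],
  [1, 2, 3, 4, 3, 2, 3, 4, 5, 4, 0, 1, 2],
  [2, 3, 4, 3, 2, 3, 4, 5, 4, 3, 1, 0, 1],
  [3, 4, 3, 2, 1, 4, 5, 4, 3, 2, 2, 1, 0]]

def d (a b : Fin 13) : ℕ := ((dmat.getD a.val []).getD b.val 0)

def edgeList : List (Fin 13 × Fin 13) :=
  [(0,1),(1,2),(2,3),(3,4),(0,5),(5,6),(6,7),(7,8),(8,9),(9,4),(0,10),(10,11),(11,12),(12,4)]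

def adjB (a b : Fin 13) : Bool :=
  edgeList.any (fun p => (p.1 = a ∧ p.2 = b) ∨ (p.1 = b ∧ p.2 = a))

lemma adj_iff (a b : Fin 13) : theta464.Adj a b ↔ adjB a b = true := by
  rw [theta464, SimpleGraph.fromEdgeSet_adj]
  simp only [Set.mem_insert_iff, Set.mem_singleton_iff, Sym2.eq, Sym2.rel_iff',
    Prod.mk.injEq, Prod.swap_prod_mk]
  fin_cases a <;> fin_cases b <;> decide

lemma hdiag : ∀ a : Fin 13, d a a = 0 := by decide

lemma hzero : ∀ a b : Fin 13, d a b = 0 → a = b := by decide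

lemma hstep : ∀ a b : Fin 13, a ≠ b → ∃ c, adjB a c = true ∧ d c b + 1 = d a b := by decide

lemma htri : ∀ a c b : Fin 13, adjB a c = true → d a b ≤ d c b + 1 := by decide

lemma exists_walk : ∀ (n : ℕ) (a b : Fin 13), d a b = n →
    ∃ p : theta464.Walk a b, p.length = n := by
  intro n
  induction n with
  | zero =>
    intro a b h
    obtain rfl := hzero a b h
    exact ⟨SimpleGraph.Walk.nil, rfl⟩
  | succ n ih =>
    intro a b h
    have hne : a ≠ b := by rintro rfl; rw [hdiag] at h; omega
    obtain ⟨c, hadj, hc⟩ := hstep a b hne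
    obtain ⟨p, hp⟩ := ih c b (by omega)
    exact ⟨SimpleGraph.Walk.cons ((adj_iff a c).mpr hadj) p, by simp [hp]⟩

lemma le_length : ∀ {a b : Fin 13} (p : theta464.Walk a b), d a b ≤ p.length := by
  intro a b p
  induction p with
  | nil => simp [hdiag]
  | @cons a c b h p ih =>
    have := htri a c b ((adj_iff a c).mp h)
    simp only [SimpleGraph.Walk.length_cons]
    omega

lemma dist_eq (a b : Fin 13) : theta464.dist a b = d a b := by
  obtain ⟨p, hp⟩ := exists_walk (d a b) a b rfl
  have hreach : theta464.Reachable a b := ⟨p⟩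
  refine le_antisymm (hp ▸ SimpleGraph.dist_le p) ?_
  obtain ⟨q, hq⟩ := hreach.exists_walk_length_eq_dist
  calc d a b ≤ q.length := le_length q
    _ = _ := hq

lemma resolving_mono {W W' : Finset (Fin 13)} (h : W ⊆ W')
    (hR : IsResolving theta464 (↑W)) : IsResolving theta464 (↑W') := by
  intro x y hxy
  exact hR x y fun w hw => hxy w (h hw)

lemma two_fail : ∀ a b : Fin 13, ∃ x y : Fin 13, x ≠ y ∧ d x a = d y a ∧ d x b = d y b := by
  decide

lemma three_resolves :
    ∀ x y : Fin 13, d x 0 = d y 0 → d x 1 = d y 1 → d x 4 = d y 4 → x = y := by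
  decide

end Theta464Aux

open Theta464Aux in
/-- No 2-element vertex subset resolves `Θ_{4,6,4}`; hence its metric dimension is `3`. -/
theorem theta464_metricDim :
    (∀ W : Finset (Fin 13), W.card = 2 → ¬ IsResolving theta464 (↑W))
    ∧ metricDim theta464 = 3 := by
  have part1 : ∀ W : Finset (Fin 13), W.card = 2 → ¬ IsResolving theta464 (↑W) := by
    intro W hW hres
    obtain ⟨a, b, hab, rfl⟩ := Finset.card_eq_two.mp hW
    obtain ⟨x, y, hxy, h1, h2⟩ := two_fail a b
    apply hxy
    apply hres
    intro w hw
    simp only [Finset.coe_insert, Finset.coe_singleton, Set.mem_insert_iff,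
      Set.mem_singleton_iff] at hw
    rcases hw with rfl | rfl <;> rw [dist_eq, dist_eq] <;> assumption
  refine ⟨part1, ?_⟩
  have h3 : 3 ∈ {n | ∃ W : Finset (Fin 13), IsResolving theta464 (↑W) ∧ W.card = n} := by
    refine ⟨{0, 1, 4}, ?_, by decide⟩
    intro x y hxy
    refine three_resolves x y ?_ ?_ ?_ <;> rw [← dist_eq, ← dist_eq] <;>
      apply hxy <;> simp
  have hlb : ∀ n ∈ {n | ∃ W : Finset (Fin 13), IsResolving theta464 (↑W) ∧ W.card = n},
      3 ≤ n := by
    rintro n ⟨W, hres, rfl⟩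
    by_contra hlt
    push_neg at hlt
    have hcard : W.card ≤ 2 := by omega
    obtain ⟨W', hsub, hW'⟩ := Finset.exists_superset_card_eq hcard (by simp)
    exact part1 W' hW' (resolving_mono hsub hres)
  exact le_antisymm (Nat.sInf_le h3) (le_csInf ⟨3, h3⟩ hlb)
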